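/- Let I (real items) be a finite set partitioned into categories {I_l}_{l∈L}, let Ĩ ⊇ I be a finite superset (including pseudo items), let J (real stores) be a finite set, and let J̃ = J ⊎ {h_l : l ∈ L} ⊎ {e}. Let S_i ≥ 0 (i ∈ Ĩ) be supplies, let H_l ≥ 0, set A_l = Σ_{i∈I_l} S_i and M_{h_l} = max(0, A_l − H_l), and let T_{ij} be finite time index sets. Suppose d = (d_{ij}^t) ≥ 0 satisfies: Σ_{j∈J̃} Σ_{t∈T_{ij}} d_{ij}^t = S_i for all i ∈ Ĩ; Σ_{i∈Ĩ} Σ_{t∈T_{ij}} d_{i h_l}^t = M_{h_l} for all l ∈ L; and d_{i h_l}^t = 0 whenever i ∉ I_l. Then for every l ∈ L, the total allocation of category-l items to real stores satisfies Σ_{i∈I_l} Σ_{j∈J} Σ_{t∈T_{ij}} d_{ij}^t ≤ H_l. -/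

import Mathlib

open Finset

/-- correctness of the labour-constraint encoding. Real items `I`
(partitioned into categories by `cat : I → L`) are extended by pseudo items `K`
(`Ĩ = I ⊕ K`), and real stores `J` are extended by the labour pseudo stores `h l`
and the surplus pseudo store `e` (`J̃ = J ⊕ L ⊕ Unit`). If a nonnegative plan `d`
has row sums equal to the supplies `S`, the column sum at each `h l` equals
`M_{h_l} = max 0 (A_l - H_l)` with `A_l = ∑_{i ∈ I_l} S i`, and `d i (h l) t = 0`
whenever `i ∉ I_l`, then for every category `l` the total allocation of category-`l`
items to real stores is at most `H l`. -/
theorem labour_encoding_correct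
    (I K J L : Type*) [Fintype I] [Fintype K] [Fintype J] [Fintype L] [DecidableEq L]
    (cat : I → L)
    (S : I ⊕ K → ℝ) (hS : ∀ i, 0 ≤ S i)
    (H : L → ℝ) (hH : ∀ l, 0 ≤ H l)
    (tm : I ⊕ K → J ⊕ (L ⊕ Unit) → ℕ)
    (d : I ⊕ K → J ⊕ (L ⊕ Unit) → ℕ → ℝ)
    (hd_nonneg : ∀ i j t, 0 ≤ d i j t)
    (h_row : ∀ i, ∑ j, ∑ t ∈ Finset.range (tm i j + 1), d i j t = S i)
    (h_col_h : ∀ l, ∑ i, ∑ t ∈ Finset.range (tm i (Sum.inr (Sum.inl l)) + 1),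
        d i (Sum.inr (Sum.inl l)) t
        = max 0 ((∑ i ∈ univ.filter (fun i => cat i = l), S (Sum.inl i)) - H l))
    (h_zero : ∀ (i : I ⊕ K) (l : L) (t : ℕ),
        (∀ i₀ : I, i = Sum.inl i₀ → cat i₀ ≠ l) → d i (Sum.inr (Sum.inl l)) t = 0) :
    ∀ l, ∑ i ∈ univ.filter (fun i => cat i = l), ∑ j : J,
        ∑ t ∈ Finset.range (tm (Sum.inl i) (Sum.inl j) + 1), d (Sum.inl i) (Sum.inl j) t
      ≤ H l := by
  intro l
  classical
  set F := univ.filter (fun i => cat i = l) with hF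
  set A := ∑ i ∈ F, S (Sum.inl i) with hA
  -- g i = amount item i sends to pseudo store h_l
  set g : I ⊕ K → ℝ := fun i =>
    ∑ t ∈ Finset.range (tm i (Sum.inr (Sum.inl l)) + 1), d i (Sum.inr (Sum.inl l)) t with hg
  have hgz : ∀ i : I ⊕ K, (∀ i₀ : I, i = Sum.inl i₀ → cat i₀ ≠ l) → g i = 0 := by
    intro i hi
    exact Finset.sum_eq_zero fun t _ => h_zero i l t hi
  have hgnn : ∀ i, 0 ≤ g i := fun i =>
    Finset.sum_nonneg fun t _ => hd_nonneg _ _ _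
  have hcol : ∑ i ∈ F, g (Sum.inl i) = max 0 (A - H l) := by
    rw [← h_col_h l]
    rw [Fintype.sum_sum_type]
    have h2 : ∑ i : K, g (Sum.inr i) = 0 :=
      Finset.sum_eq_zero fun i _ => hgz _ (by simp)
    have h3 : ∑ i : I, g (Sum.inl i)
        = ∑ i ∈ F, g (Sum.inl i) + ∑ i ∈ univ.filter (fun i => ¬ cat i = l), g (Sum.inl i) :=
      (Finset.sum_filter_add_sum_filter_not univ (fun i => cat i = l) _).symm
    have h4 : ∑ i ∈ univ.filter (fun i => ¬ cat i = l), g (Sum.inl i) = 0 := by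
      refine Finset.sum_eq_zero fun i hi => hgz _ ?_
      intro i₀ hi₀
      simp only [Finset.mem_filter] at hi
      cases Sum.inl.inj hi₀
      exact hi.2
    rw [h2, h3, h4]
    ring
  -- split the row sums
  have hsplit : ∀ i : I, S (Sum.inl i)
      = (∑ j : J, ∑ t ∈ Finset.range (tm (Sum.inl i) (Sum.inl j) + 1), d (Sum.inl i) (Sum.inl j) t)
        + ∑ j : L ⊕ Unit, ∑ t ∈ Finset.range (tm (Sum.inl i) (Sum.inr j) + 1),
            d (Sum.inl i) (Sum.inr j) t := by
    intro i
    rw [← h_row (Sum.inl i), Fintype.sum_sum_type]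
  have hpseudo : ∀ i : I, g (Sum.inl i)
      ≤ ∑ j : L ⊕ Unit, ∑ t ∈ Finset.range (tm (Sum.inl i) (Sum.inr j) + 1),
          d (Sum.inl i) (Sum.inr j) t := by
    intro i
    exact Finset.single_le_sum (f := fun j : L ⊕ Unit =>
      ∑ t ∈ Finset.range (tm (Sum.inl i) (Sum.inr j) + 1), d (Sum.inl i) (Sum.inr j) t)
      (fun j _ => Finset.sum_nonneg fun t _ => hd_nonneg _ _ _) (Finset.mem_univ (Sum.inl l))
  have key : (∑ i ∈ F, ∑ j : J, ∑ t ∈ Finset.range (tm (Sum.inl i) (Sum.inl j) + 1),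
      d (Sum.inl i) (Sum.inl j) t) ≤ A - max 0 (A - H l) := by
    have h1 : (∑ i ∈ F, ∑ j : J, ∑ t ∈ Finset.range (tm (Sum.inl i) (Sum.inl j) + 1),
        d (Sum.inl i) (Sum.inl j) t)
        + ∑ i ∈ F, g (Sum.inl i) ≤ A := by
      rw [hA]
      rw [← Finset.sum_add_distrib]
      refine Finset.sum_le_sum fun i _ => ?_
      rw [hsplit i]
      exact add_le_add_right (hpseudo i) _
    rw [← hcol]
    linarith
  have : A - max 0 (A - H l) ≤ H l := by
    rcases le_total (A - H l) 0 with h | h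
    · have hz : max 0 (A - H l) = 0 := max_eq_left h
      rw [hz]; linarith
    · have hz : max 0 (A - H l) = A - H l := max_eq_right h
      rw [hz]; linarith
  linarith
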